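/- Let ν : ℝ → ℝ be defined by ν(x) = 0 for x ≤ 0, ν(x) = x for 0 ≤ x ≤ 1, and ν(x) = 1 for x ≥ 1, and let Φ : ℝ → ℝ be the Meyer scaling function in the frequency domain, defined by Φ(ω) = 1/√(2π) if |ω| ≤ 2π/3, Φ(ω) = (1/√(2π))·cos((π/2)·ν(3|ω|/(2π) − 1)) if 2π/3 ≤ |ω| ≤ 4π/3, and Φ(ω) = 0 if |ω| ≥ 4π/3. Then for every ω ∈ ℝ, the sum over all integers k of |Φ(ω + 2πk)|² equals 1/(2π). -/

import Mathlib

open Real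

/-- The auxiliary function ν: ν(x) = 0 for x ≤ 0, ν(x) = x for 0 ≤ x ≤ 1,
ν(x) = 1 for x ≥ 1. -/
noncomputable def meyerNu (x : ℝ) : ℝ :=
  if x ≤ 0 then 0 else if x ≤ 1 then x else 1

/-- The Meyer scaling function in the frequency domain:
Φ(ω) = 1/√(2π) if |ω| ≤ 2π/3,
Φ(ω) = (1/√(2π))·cos((π/2)·ν(3|ω|/(2π) − 1)) if 2π/3 ≤ |ω| ≤ 4π/3,
Φ(ω) = 0 if |ω| ≥ 4π/3. -/
noncomputable def meyerPhi (ω : ℝ) : ℝ :=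
  if |ω| ≤ 2 * π / 3 then 1 / Real.sqrt (2 * π)
  else if |ω| ≤ 4 * π / 3 then
    (1 / Real.sqrt (2 * π)) * Real.cos ((π / 2) * meyerNu (3 * |ω| / (2 * π) - 1))
  else 0

lemma meyerNu_of_mem {x : ℝ} (h0 : 0 ≤ x) (h1 : x ≤ 1) : meyerNu x = x := by
  unfold meyerNu
  rcases eq_or_lt_of_le h0 with h | h
  · simp [← h]
  · rw [if_neg (by linarith), if_pos h1]

lemma meyerPhi_of_far {x : ℝ} (hx : 4 * π / 3 < |x|) : meyerPhi x = 0 := by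
  have hπ := pi_pos
  unfold meyerPhi
  rw [if_neg (by linarith), if_neg (by linarith)]

lemma meyerPhi_mid {x : ℝ} (h1 : 2 * π / 3 ≤ |x|) (h2 : |x| ≤ 4 * π / 3) :
    meyerPhi x = (1 / Real.sqrt (2 * π)) * Real.cos ((π / 2) * meyerNu (3 * |x| / (2 * π) - 1)) := by
  have hπ := pi_pos
  unfold meyerPhi
  rcases eq_or_lt_of_le h1 with h | h
  · rw [if_pos h.ge, ← h]
    have h0 : 3 * (2 * π / 3) / (2 * π) - 1 = 0 := by field_simp; norm_num
    rw [h0]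
    simp [meyerNu]
  · rw [if_neg (by linarith), if_pos h2]

lemma key (ω : ℝ) (h0 : 0 ≤ ω) (h1 : ω < 2 * π) :
    |meyerPhi ω| ^ 2 + |meyerPhi (ω - 2 * π)| ^ 2 = 1 / (2 * π) := by
  have hπ := pi_pos
  have hsq : Real.sqrt (2 * π) ^ 2 = 2 * π := Real.sq_sqrt (by positivity)
  rw [sq_abs, sq_abs]
  rcases lt_or_ge ω (2 * π / 3) with hc | hc
  · -- ω < 2π/3 : first term 1/(2π), second zero
    have e1 : meyerPhi ω = 1 / Real.sqrt (2 * π) := by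
      unfold meyerPhi; rw [if_pos (by rw [abs_of_nonneg h0]; linarith)]
    have e2 : meyerPhi (ω - 2 * π) = 0 :=
      meyerPhi_of_far (by rw [abs_of_nonpos (by linarith)]; linarith)
    rw [e1, e2]
    rw [div_pow, one_pow, hsq]
    simp
  rcases le_or_gt ω (4 * π / 3) with hd | hd
  · -- 2π/3 ≤ ω ≤ 4π/3 : transition
    have haω : |ω| = ω := abs_of_nonneg h0
    have hb : |ω - 2 * π| = 2 * π - ω := by rw [abs_of_nonpos (by linarith)]; ring
    have e1 := meyerPhi_mid (x := ω) (by rw [haω]; linarith) (by rw [haω]; linarith)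
    have e2 := meyerPhi_mid (x := ω - 2 * π) (by rw [hb]; linarith) (by rw [hb]; linarith)
    rw [haω] at e1; rw [hb] at e2
    set t : ℝ := 3 * ω / (2 * π) - 1 with ht
    have ht0 : 0 ≤ t := by rw [ht]; rw [div_sub' (by positivity), le_div_iff₀ (by positivity)]; ring_nf; nlinarith
    have ht1 : t ≤ 1 := by rw [ht]; rw [div_sub' (by positivity), div_le_iff₀ (by positivity)]; nlinarith
    have h2t : 3 * (2 * π - ω) / (2 * π) - 1 = 1 - t := by
      rw [ht]; field_simp; ring
    rw [e1, e2, h2t, meyerNu_of_mem ht0 ht1, meyerNu_of_mem (by linarith) (by linarith)]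
    have : π / 2 * (1 - t) = π / 2 - π / 2 * t := by ring
    rw [this, Real.cos_pi_div_two_sub, mul_pow, mul_pow, ← mul_add, add_comm (Real.cos (π / 2 * t) ^ 2), Real.sin_sq_add_cos_sq, mul_one, div_pow, one_pow, hsq]
  · -- 4π/3 < ω < 2π
    have e1 : meyerPhi ω = 0 := meyerPhi_of_far (by rw [abs_of_nonneg h0]; linarith)
    have e2 : meyerPhi (ω - 2 * π) = 1 / Real.sqrt (2 * π) := by
      unfold meyerPhi
      rw [if_pos (by rw [abs_of_nonpos (by linarith)]; linarith)]
    rw [e1, e2]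
    rw [div_pow, one_pow, hsq]
    simp

/-- For every ω ∈ ℝ, the sum over all integers k of |Φ(ω + 2πk)|²
equals 1/(2π). -/
theorem meyerPhi_partition_of_unity (ω : ℝ) :
    ∑' k : ℤ, |meyerPhi (ω + 2 * π * k)| ^ 2 = 1 / (2 * π) := by
  have hπ := pi_pos
  set n : ℤ := ⌊ω / (2 * π)⌋ with hn
  set ω₀ : ℝ := ω - 2 * π * n with hω₀
  have hfl : (n : ℝ) ≤ ω / (2 * π) := Int.floor_le _
  have hfl2 : ω / (2 * π) < n + 1 := Int.lt_floor_add_one _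
  have h0 : 0 ≤ ω₀ := by
    rw [hω₀]
    nlinarith [(le_div_iff₀ (show (0:ℝ) < 2 * π by positivity)).mp hfl]
  have h1 : ω₀ < 2 * π := by
    rw [hω₀]
    nlinarith [(div_lt_iff₀ (show (0:ℝ) < 2 * π by positivity)).mp hfl2]
  have hshift : ∀ k : ℤ, ω + 2 * π * k = ω₀ + 2 * π * ((k + n : ℤ) : ℝ) := by
    intro k; push_cast; rw [hω₀]; ring
  calc ∑' k : ℤ, |meyerPhi (ω + 2 * π * k)| ^ 2
      = ∑' k : ℤ, |meyerPhi (ω₀ + 2 * π * (((Equiv.addRight n) k : ℤ) : ℝ))| ^ 2 := by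
        exact tsum_congr fun k => by rw [hshift k]; rfl
    _ = ∑' k : ℤ, |meyerPhi (ω₀ + 2 * π * (k : ℝ))| ^ 2 :=
        (Equiv.addRight n).tsum_eq (fun k : ℤ => |meyerPhi (ω₀ + 2 * π * (k : ℝ))| ^ 2)
    _ = ∑ k ∈ ({-1, 0} : Finset ℤ), |meyerPhi (ω₀ + 2 * π * (k : ℝ))| ^ 2 := by
        apply tsum_eq_sum
        intro k hk
        simp only [Finset.mem_insert, Finset.mem_singleton] at hk
        push_neg at hk
        have hk2 : k ≤ -2 ∨ 1 ≤ k := by omega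
        have hz : meyerPhi (ω₀ + 2 * π * k) = 0 := by
          apply meyerPhi_of_far
          rcases hk2 with hneg | hpos
          · have hr : (k : ℝ) ≤ -2 := by exact_mod_cast hneg
            rw [abs_of_nonpos (by nlinarith)]
            nlinarith
          · have hr : (1 : ℝ) ≤ (k : ℝ) := by exact_mod_cast hpos
            rw [abs_of_nonneg (by nlinarith)]
            nlinarith
        rw [hz]
        simp
    _ = 1 / (2 * π) := by
        rw [Finset.sum_insert (by decide), Finset.sum_singleton]
        simp only [Int.cast_neg, Int.cast_one, Int.cast_zero, mul_neg_one, mul_zero, add_zero]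
        rw [← sub_eq_add_neg, add_comm]
        exact key ω₀ h0 h1
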